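/- Let 0 < q < 1 and ν ∈ ℝ. Define ψ_L(z̄, z) = ∑_{m=0}^∞ (−1)^m q^{2m} (q^{−2iν+2};q²)_m / (q²;q²)_m · (z̄ z)^m, which converges absolutely for |z̄ z| < q^{−2}. Then: (i) ψ_L is the U_q(SU(2))-invariant vector of the class-one principal series representation, i.e. for all z, z̄ ∈ ℂ∖{0} with all arguments in the domain of convergence, (z̄/(1−q²)) (−q^{(iν+2)/2} ψ_L(q^{−1}z̄, z) + q^{−3iν/2+3} ψ_L(q z̄, z)) = q^{iν/2} (ψ_L(z̄, q^{−1}z) − ψ_L(z̄, q z)) / ((1−q²) z) (the condition π(C*).ψ_L = ψ_L.π(B)), and ψ_L(q^{−1}z̄, q z) = ψ_L(z̄, z) (the condition π(A*).ψ_L.π(A^{−1}) = ψ_L); (ii) ψ_L has the closed form ψ_L(z̄, z) = (−q^{−2iν+4} z̄z ; q²)_∞ / (−q² z̄z ; q²)_∞ for |z̄z| < q^{−2}. -/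

import Mathlib

/-- The finite q-Pochhammer symbol `(a;Q)_n = ∏_{j<n} (1 − a Q^j)`. -/
noncomputable def qPoch (Q a : ℂ) (n : ℕ) : ℂ :=
  ∏ j ∈ Finset.range n, (1 - a * Q ^ j)

/-- The infinite q-Pochhammer symbol `(a;Q)_∞ = ∏_{j≥0} (1 − a Q^j)`. -/
noncomputable def qPochInf (Q a : ℂ) : ℂ :=
  ∏' j : ℕ, (1 - a * Q ^ j)

/-- `q^w = exp(w ln q)` for real `q > 0` and complex `w`. -/
noncomputable def qpow (q : ℝ) (w : ℂ) : ℂ := Complex.exp (w * (Real.log q : ℂ))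

/-- The `U_q(SU(2))`-invariant vector
`ψ_L(z̄,z) = ∑_m (−1)^m q^{2m} (q^{−2iν+2};q²)_m/(q²;q²)_m (z̄z)^m`. -/
noncomputable def psiL (q ν : ℝ) (zb z : ℂ) : ℂ :=
  ∑' m : ℕ, (-1) ^ m * (q : ℂ) ^ (2 * m)
    * qPoch ((q : ℂ) ^ 2) (qpow q (-(2 * Complex.I * ν) + 2)) m
    / qPoch ((q : ℂ) ^ 2) ((q : ℂ) ^ 2) m * (zb * z) ^ m

open Complex Filter Finset

lemma qPoch_succ (Q a : ℂ) (n : ℕ) :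
    qPoch Q a (n + 1) = qPoch Q a n * (1 - a * Q ^ n) := Finset.prod_range_succ _ _

lemma qPoch_zero (Q a : ℂ) : qPoch Q a 0 = 1 := Finset.prod_range_zero _

lemma geomsum_le {Q : ℝ} (hQ0 : 0 ≤ Q) (hQ1 : Q < 1) (n : ℕ) :
    ∑ j ∈ Finset.range n, Q ^ j ≤ (1 - Q)⁻¹ := by
  have := Summable.sum_le_tsum (Finset.range n) (fun i _ => by positivity)
    (summable_geometric_of_lt_one hQ0 hQ1)
  rwa [tsum_geometric_of_lt_one hQ0 hQ1] at this

lemma norm_qPoch_le {Q : ℝ} (hQ0 : 0 ≤ Q) (hQ1 : Q < 1) {a : ℂ} (ha : ‖a‖ ≤ 1) (n : ℕ) :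
    ‖qPoch (Q : ℂ) a n‖ ≤ Real.exp (1 - Q)⁻¹ := by
  have h1 : ‖qPoch (Q : ℂ) a n‖ ≤ ∏ j ∈ Finset.range n, (1 + Q ^ j) := by
    rw [qPoch]
    refine (Finset.norm_prod_le _ _).trans ?_
    refine Finset.prod_le_prod (fun _ _ => norm_nonneg _) (fun j _ => ?_)
    calc ‖1 - a * (Q : ℂ) ^ j‖ ≤ ‖(1 : ℂ)‖ + ‖a * (Q : ℂ) ^ j‖ := norm_sub_le _ _
      _ ≤ 1 + Q ^ j := by
          rw [norm_one, norm_mul, norm_pow, Complex.norm_real, Real.norm_of_nonneg hQ0]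
          have : ‖a‖ * Q ^ j ≤ 1 * Q ^ j :=
            mul_le_mul_of_nonneg_right ha (by positivity)
          linarith
  refine h1.trans ?_
  calc ∏ j ∈ Finset.range n, (1 + Q ^ j)
      ≤ ∏ j ∈ Finset.range n, Real.exp (Q ^ j) :=
        Finset.prod_le_prod (fun j _ => by positivity)
          (fun j _ => by have := Real.add_one_le_exp (Q ^ j); linarith)
    _ = Real.exp (∑ j ∈ Finset.range n, Q ^ j) := (Real.exp_sum _ _).symm
    _ ≤ Real.exp (1 - Q)⁻¹ := Real.exp_le_exp.2 (geomsum_le hQ0 hQ1 n)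

lemma qPochQ_eq {Q : ℝ} (n : ℕ) :
    qPoch (Q : ℂ) (Q : ℂ) n = ((∏ j ∈ Finset.range n, (1 - Q ^ (j + 1)) : ℝ) : ℂ) := by
  rw [qPoch, Complex.ofReal_prod]
  refine Finset.prod_congr rfl (fun j _ => ?_)
  push_cast
  ring

lemma one_sub_pos_aux {Q : ℝ} (hQ0 : 0 ≤ Q) (hQ1 : Q < 1) (j : ℕ) :
    Q ^ (j + 1) ≤ Q ∧ 0 < 1 - Q ^ (j + 1) := by
  have h1 : Q ^ (j + 1) ≤ Q := by
    calc Q ^ (j + 1) ≤ Q ^ 1 := pow_le_pow_of_le_one hQ0 hQ1.le (by omega)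
      _ = Q := pow_one Q
  exact ⟨h1, by nlinarith⟩

lemma exp_le_one_sub {t : ℝ} (h0 : 0 ≤ t) (h1 : t < 1) {s : ℝ} (hs : t / (1 - t) ≤ s) :
    Real.exp (-s) ≤ 1 - t := by
  have ht : 0 < 1 - t := by linarith
  have h2 : (1 - t)⁻¹ ≤ Real.exp (t / (1 - t)) := by
    have := Real.add_one_le_exp (t / (1 - t))
    have he : t / (1 - t) + 1 = (1 - t)⁻¹ := by field_simp; ring
    linarith
  have h3 : (1 - t)⁻¹ ≤ Real.exp s := h2.trans (Real.exp_le_exp.2 hs)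
  rw [Real.exp_neg]
  calc (Real.exp s)⁻¹ ≤ ((1 - t)⁻¹)⁻¹ :=
        inv_anti₀ (by positivity) h3
    _ = 1 - t := inv_inv _

lemma prod_lower {Q : ℝ} (hQ0 : 0 < Q) (hQ1 : Q < 1) (n : ℕ) :
    Real.exp (-(Q * ((1 - Q)⁻¹ * (1 - Q)⁻¹))) ≤ ∏ j ∈ Finset.range n, (1 - Q ^ (j + 1)) := by
  have hQd : 0 < 1 - Q := by linarith
  have key : ∀ j : ℕ, Real.exp (-(Q ^ (j + 1) * (1 - Q)⁻¹)) ≤ 1 - Q ^ (j + 1) := by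
    intro j
    obtain ⟨h1, h2⟩ := one_sub_pos_aux hQ0.le hQ1 j
    refine exp_le_one_sub (by positivity) (by linarith) ?_
    have h3 : 1 - Q ≤ 1 - Q ^ (j + 1) := by linarith
    rw [div_eq_mul_inv]
    exact mul_le_mul_of_nonneg_left (inv_anti₀ hQd h3) (by positivity)
  calc Real.exp (-(Q * ((1 - Q)⁻¹ * (1 - Q)⁻¹)))
      ≤ Real.exp (∑ j ∈ Finset.range n, -(Q ^ (j + 1) * (1 - Q)⁻¹)) := by
        refine Real.exp_le_exp.2 ?_
        rw [Finset.sum_neg_distrib]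
        rw [neg_le_neg_iff]
        calc ∑ j ∈ Finset.range n, Q ^ (j + 1) * (1 - Q)⁻¹
            = (∑ j ∈ Finset.range n, Q ^ j) * (Q * (1 - Q)⁻¹) := by
              rw [Finset.sum_mul]
              refine Finset.sum_congr rfl (fun j _ => ?_)
              rw [pow_succ]
              ring
          _ ≤ (1 - Q)⁻¹ * (Q * (1 - Q)⁻¹) :=
              mul_le_mul_of_nonneg_right (geomsum_le hQ0.le hQ1 n) (by positivity)
          _ = Q * ((1 - Q)⁻¹ * (1 - Q)⁻¹) := by ring
    _ = ∏ j ∈ Finset.range n, Real.exp (-(Q ^ (j + 1) * (1 - Q)⁻¹)) := Real.exp_sum _ _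
    _ ≤ ∏ j ∈ Finset.range n, (1 - Q ^ (j + 1)) :=
        Finset.prod_le_prod (fun j _ => (Real.exp_pos _).le) (fun j _ => key j)

/-- uniform bound for the coefficients -/
noncomputable def Mq (Q : ℝ) : ℝ :=
  Real.exp (1 - Q)⁻¹ * Real.exp (Q * ((1 - Q)⁻¹ * (1 - Q)⁻¹))

lemma Mq_pos (Q : ℝ) : 0 < Mq Q := mul_pos (Real.exp_pos _) (Real.exp_pos _)

lemma qPochQ_pos {Q : ℝ} (hQ0 : 0 < Q) (hQ1 : Q < 1) (n : ℕ) :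
    0 < ∏ j ∈ Finset.range n, (1 - Q ^ (j + 1)) :=
  Finset.prod_pos (fun j _ => (one_sub_pos_aux hQ0.le hQ1 j).2)

lemma qPochQ_ne {Q : ℝ} (hQ0 : 0 < Q) (hQ1 : Q < 1) (n : ℕ) :
    qPoch (Q : ℂ) (Q : ℂ) n ≠ 0 := by
  rw [qPochQ_eq]
  exact_mod_cast (qPochQ_pos hQ0 hQ1 n).ne'

lemma norm_coeff_le {Q : ℝ} (hQ0 : 0 < Q) (hQ1 : Q < 1) {a : ℂ} (ha : ‖a‖ ≤ 1) (n : ℕ) :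
    ‖qPoch (Q : ℂ) a n / qPoch (Q : ℂ) (Q : ℂ) n‖ ≤ Mq Q := by
  rw [norm_div, qPochQ_eq, Complex.norm_real,
    Real.norm_of_nonneg (qPochQ_pos hQ0 hQ1 n).le]
  have h1 := norm_qPoch_le hQ0.le hQ1 ha n
  have h2 := prod_lower hQ0 hQ1 n
  have h3 : (0 : ℝ) < Real.exp (-(Q * ((1 - Q)⁻¹ * (1 - Q)⁻¹))) := Real.exp_pos _
  calc ‖qPoch (Q : ℂ) a n‖ / ∏ j ∈ Finset.range n, (1 - Q ^ (j + 1))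
      ≤ Real.exp (1 - Q)⁻¹ / Real.exp (-(Q * ((1 - Q)⁻¹ * (1 - Q)⁻¹))) :=
        div_le_div₀ (Real.exp_pos _).le h1 h3 h2
    _ = Mq Q := by
        rw [Real.exp_neg, Mq, div_eq_mul_inv, inv_inv]

lemma summable_main {Q : ℝ} (hQ0 : 0 < Q) (hQ1 : Q < 1) {a : ℂ} (ha : ‖a‖ ≤ 1)
    {x : ℂ} (hx : ‖x‖ < 1) :
    Summable (fun m : ℕ => qPoch (Q : ℂ) a m / qPoch (Q : ℂ) (Q : ℂ) m * x ^ m) := by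
  refine Summable.of_norm_bounded (g := fun m => Mq Q * ‖x‖ ^ m)
    ((summable_geometric_of_lt_one (norm_nonneg x) hx).mul_left _) (fun m => ?_)
  rw [norm_mul, norm_pow]
  exact mul_le_mul_of_nonneg_right (norm_coeff_le hQ0 hQ1 ha m) (by positivity)

/-- the q-hypergeometric series `₁φ₀(a;;Q;x) = ∑ (a;Q)_m/(Q;Q)_m x^m` -/
noncomputable def Fq (Q a x : ℂ) : ℂ := ∑' m : ℕ, qPoch Q a m / qPoch Q Q m * x ^ m

lemma Fq_hasSum {Q : ℝ} (hQ0 : 0 < Q) (hQ1 : Q < 1) {a : ℂ} (ha : ‖a‖ ≤ 1)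
    {x : ℂ} (hx : ‖x‖ < 1) :
    HasSum (fun m : ℕ => qPoch (Q : ℂ) a m / qPoch (Q : ℂ) (Q : ℂ) m * x ^ m)
      (Fq (Q : ℂ) a x) := (summable_main hQ0 hQ1 ha hx).hasSum

lemma coeff_rec {Q : ℝ} (hQ0 : 0 < Q) (hQ1 : Q < 1) (a : ℂ) (m : ℕ) :
    qPoch (Q : ℂ) a (m + 1) / qPoch (Q : ℂ) (Q : ℂ) (m + 1) * (1 - (Q : ℂ) ^ (m + 1))
      = qPoch (Q : ℂ) a m / qPoch (Q : ℂ) (Q : ℂ) m * (1 - a * (Q : ℂ) ^ m) := by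
  have h1 := qPochQ_ne hQ0 hQ1 m
  have h2 := qPochQ_ne hQ0 hQ1 (m + 1)
  have h2' : qPoch (Q : ℂ) (Q : ℂ) (m + 1) = qPoch (Q : ℂ) (Q : ℂ) m * (1 - (Q : ℂ) ^ (m + 1)) := by
    rw [qPoch_succ]; ring_nf
  have h3 : (1 - (Q : ℂ) ^ (m + 1)) ≠ 0 := by
    have h4 := (one_sub_pos_aux hQ0.le hQ1 m).2
    intro h
    have h5 : ((1 - Q ^ (m + 1) : ℝ) : ℂ) = 0 := by push_cast; linear_combination h
    simp only [Complex.ofReal_eq_zero] at h5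
    linarith
  rw [qPoch_succ (Q : ℂ) a m, h2']
  field_simp

lemma funcEq {Q : ℝ} (hQ0 : 0 < Q) (hQ1 : Q < 1) {a x : ℂ} (ha : ‖a‖ ≤ 1) (hx : ‖x‖ < 1) :
    (1 - x) * Fq (Q : ℂ) a x = (1 - a * x) * Fq (Q : ℂ) a ((Q : ℂ) * x) := by
  have hQx : ‖(Q : ℂ) * x‖ < 1 := by
    rw [norm_mul, Complex.norm_real, Real.norm_of_nonneg hQ0.le]
    nlinarith [norm_nonneg x]
  have h1 : HasSum (fun m => qPoch (Q : ℂ) a m / qPoch (Q : ℂ) (Q : ℂ) m * x ^ m)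
    (Fq (Q : ℂ) a x) := Fq_hasSum hQ0 hQ1 ha hx
  have h2 : HasSum (fun m => qPoch (Q : ℂ) a m / qPoch (Q : ℂ) (Q : ℂ) m * ((Q : ℂ) * x) ^ m)
    (Fq (Q : ℂ) a ((Q : ℂ) * x)) := Fq_hasSum hQ0 hQ1 ha hQx
  have hsum_u : Summable (fun m : ℕ =>
      qPoch (Q : ℂ) a m / qPoch (Q : ℂ) (Q : ℂ) m * (1 - (Q : ℂ) ^ m) * x ^ m) := by
    refine Summable.of_norm_bounded (g := fun m => Mq Q * 2 * ‖x‖ ^ m)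
      (((summable_geometric_of_lt_one (norm_nonneg x) hx)).mul_left _) (fun m => ?_)
    simp only [norm_mul, norm_pow]
    have hb : ‖(1 : ℂ) - (Q : ℂ) ^ m‖ ≤ 2 := by
      refine (norm_sub_le _ _).trans ?_
      rw [norm_one, norm_pow, Complex.norm_real, Real.norm_of_nonneg hQ0.le]
      have : Q ^ m ≤ 1 := pow_le_one₀ hQ0.le hQ1.le
      linarith
    have h4 := norm_coeff_le hQ0 hQ1 ha m
    have h5 : (0:ℝ) ≤ ‖x‖ ^ m := by positivity
    exact mul_le_mul_of_nonneg_right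
      (mul_le_mul h4 hb (norm_nonneg _) (Mq_pos Q).le) h5
  have hU : HasSum (fun m : ℕ =>
      qPoch (Q : ℂ) a m / qPoch (Q : ℂ) (Q : ℂ) m * (1 - (Q : ℂ) ^ m) * x ^ m)
      (∑' m : ℕ, qPoch (Q : ℂ) a m / qPoch (Q : ℂ) (Q : ℂ) m * (1 - (Q : ℂ) ^ m) * x ^ m) :=
    hsum_u.hasSum
  have hU1 : HasSum (fun m : ℕ =>
      qPoch (Q : ℂ) a (m + 1) / qPoch (Q : ℂ) (Q : ℂ) (m + 1) * (1 - (Q : ℂ) ^ (m + 1)) * x ^ (m + 1))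
      (∑' m : ℕ, qPoch (Q : ℂ) a m / qPoch (Q : ℂ) (Q : ℂ) m * (1 - (Q : ℂ) ^ m) * x ^ m) := by
    refine (hasSum_nat_add_iff (f := fun m : ℕ =>
      qPoch (Q : ℂ) a m / qPoch (Q : ℂ) (Q : ℂ) m * (1 - (Q : ℂ) ^ m) * x ^ m) 1).2 ?_
    simpa using hU
  have hterm : ∀ m : ℕ,
      (qPoch (Q : ℂ) a m / qPoch (Q : ℂ) (Q : ℂ) m * x ^ m
        - qPoch (Q : ℂ) a m / qPoch (Q : ℂ) (Q : ℂ) m * x ^ m * x)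
      - (qPoch (Q : ℂ) a m / qPoch (Q : ℂ) (Q : ℂ) m * ((Q : ℂ) * x) ^ m
        - qPoch (Q : ℂ) a m / qPoch (Q : ℂ) (Q : ℂ) m * ((Q : ℂ) * x) ^ m * (a * x))
      = qPoch (Q : ℂ) a m / qPoch (Q : ℂ) (Q : ℂ) m * (1 - (Q : ℂ) ^ m) * x ^ m
        - qPoch (Q : ℂ) a (m + 1) / qPoch (Q : ℂ) (Q : ℂ) (m + 1) * (1 - (Q : ℂ) ^ (m + 1))
          * x ^ (m + 1) := by
    intro m
    linear_combination (x ^ (m + 1)) * coeff_rec hQ0 hQ1 a m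
  have hL := (h1.sub (h1.mul_right x)).sub (h2.sub (h2.mul_right (a * x)))
  have hR : HasSum (fun m : ℕ =>
      (qPoch (Q : ℂ) a m / qPoch (Q : ℂ) (Q : ℂ) m * x ^ m
        - qPoch (Q : ℂ) a m / qPoch (Q : ℂ) (Q : ℂ) m * x ^ m * x)
      - (qPoch (Q : ℂ) a m / qPoch (Q : ℂ) (Q : ℂ) m * ((Q : ℂ) * x) ^ m
        - qPoch (Q : ℂ) a m / qPoch (Q : ℂ) (Q : ℂ) m * ((Q : ℂ) * x) ^ m * (a * x))) 0 := by
    simp only [hterm]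
    have h := hU.sub hU1
    rwa [sub_self] at h
  have h0 := hL.unique hR
  linear_combination h0

lemma factor_ne_zero {Q : ℝ} (hQ0 : 0 < Q) (hQ1 : Q < 1) {x : ℂ} (hx : ‖x‖ < 1) (j : ℕ) :
    (1 : ℂ) - x * (Q : ℂ) ^ j ≠ 0 := by
  intro h
  have h1 : ‖x * (Q : ℂ) ^ j‖ < 1 := by
    rw [norm_mul, norm_pow, Complex.norm_real, Real.norm_of_nonneg hQ0.le]
    have h2 : Q ^ j ≤ 1 := pow_le_one₀ hQ0.le hQ1.le
    nlinarith [norm_nonneg x, pow_pos hQ0 j]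
  have h3 : x * (Q : ℂ) ^ j = 1 := by linear_combination -h
  rw [h3, norm_one] at h1
  exact lt_irrefl _ h1

lemma summable_log {Q : ℝ} (hQ0 : 0 < Q) (hQ1 : Q < 1) {x : ℂ} (hx : ‖x‖ < 1) :
    Summable (fun j : ℕ => Complex.log (1 - x * (Q : ℂ) ^ j)) := by
  obtain ⟨N, hN⟩ : ∃ N : ℕ, Q ^ N < (2 * (‖x‖ + 1))⁻¹ := by
    refine exists_pow_lt_of_lt_one ?_ hQ1
    positivity
  refine (summable_nat_add_iff N).1 ?_
  refine Summable.of_norm_bounded (g := fun j => 3 / 2 * (‖x‖ * Q ^ N) * Q ^ j)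
    ((summable_geometric_of_lt_one hQ0.le hQ1).mul_left _) (fun j => ?_)
  have hnorm : ‖-(x * (Q : ℂ) ^ (j + N))‖ = ‖x‖ * Q ^ (j + N) := by
    rw [norm_neg, norm_mul, norm_pow, Complex.norm_real, Real.norm_of_nonneg hQ0.le]
  have hsmall : ‖-(x * (Q : ℂ) ^ (j + N))‖ ≤ 1 / 2 := by
    rw [hnorm]
    have h1 : Q ^ (j + N) ≤ Q ^ N := by
      refine pow_le_pow_of_le_one hQ0.le hQ1.le ?_
      omega
    have h2 : ‖x‖ * Q ^ (j + N) ≤ ‖x‖ * Q ^ N := by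
      exact mul_le_mul_of_nonneg_left h1 (norm_nonneg x)
    have h3 : ‖x‖ * Q ^ N ≤ (‖x‖ + 1) * (2 * (‖x‖ + 1))⁻¹ := by
      refine mul_le_mul (by linarith [norm_nonneg x]) hN.le (by positivity) (by positivity)
    have h4 : (‖x‖ + 1) * (2 * (‖x‖ + 1))⁻¹ = 1 / 2 := by
      field_simp
    linarith
  calc ‖Complex.log (1 - x * (Q : ℂ) ^ (j + N))‖
      = ‖Complex.log (1 + -(x * (Q : ℂ) ^ (j + N)))‖ := by ring_nf
    _ ≤ 3 / 2 * ‖-(x * (Q : ℂ) ^ (j + N))‖ := Complex.norm_log_one_add_half_le_self hsmall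
    _ = 3 / 2 * (‖x‖ * Q ^ N) * Q ^ j := by
        rw [hnorm, pow_add]
        ring
  done

lemma pochInf_hasProd {Q : ℝ} (hQ0 : 0 < Q) (hQ1 : Q < 1) {x : ℂ} (hx : ‖x‖ < 1) :
    HasProd (fun j : ℕ => 1 - x * (Q : ℂ) ^ j) (qPochInf (Q : ℂ) x) := by
  have h := Complex.multipliable_of_summable_log (summable_log hQ0 hQ1 hx)
  exact h.hasProd

lemma pochInf_ne_zero {Q : ℝ} (hQ0 : 0 < Q) (hQ1 : Q < 1) {x : ℂ} (hx : ‖x‖ < 1) :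
    qPochInf (Q : ℂ) x ≠ 0 := by
  have h2 := Complex.cexp_tsum_eq_tprod (f := fun j : ℕ => 1 - x * (Q : ℂ) ^ j)
    (fun j => factor_ne_zero hQ0 hQ1 hx j)
    (summable_log hQ0 hQ1 hx)
  rw [qPochInf, ← h2]
  exact Complex.exp_ne_zero _

lemma Fq_sub_one_bound {Q : ℝ} (hQ0 : 0 < Q) (hQ1 : Q < 1) {a : ℂ} (ha : ‖a‖ ≤ 1)
    {w : ℂ} {r : ℝ} (hr : r < 1) (hw : ‖w‖ ≤ r) :
    ‖Fq (Q : ℂ) a w - 1‖ ≤ Mq Q * (1 - r)⁻¹ * ‖w‖ := by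
  have hw1 : ‖w‖ < 1 := lt_of_le_of_lt hw hr
  have hr0 : 0 ≤ r := le_trans (norm_nonneg w) hw
  have hsum := summable_main hQ0 hQ1 ha hw1
  have h0 : Fq (Q : ℂ) a w = 1 + ∑' m : ℕ,
      qPoch (Q : ℂ) a (m + 1) / qPoch (Q : ℂ) (Q : ℂ) (m + 1) * w ^ (m + 1) := by
    rw [Fq, hsum.tsum_eq_zero_add]
    simp [qPoch_zero]
  rw [h0]
  have hgeom : HasSum (fun m : ℕ => Mq Q * ‖w‖ * ‖w‖ ^ m)
      (Mq Q * ‖w‖ * (1 - ‖w‖)⁻¹) :=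
    (hasSum_geometric_of_lt_one (norm_nonneg w) hw1).mul_left _
  have hb : ‖∑' m : ℕ,
      qPoch (Q : ℂ) a (m + 1) / qPoch (Q : ℂ) (Q : ℂ) (m + 1) * w ^ (m + 1)‖
      ≤ Mq Q * ‖w‖ * (1 - ‖w‖)⁻¹ := by
    refine tsum_of_norm_bounded hgeom (fun m => ?_)
    rw [norm_mul, norm_pow, pow_succ]
    calc ‖qPoch (Q : ℂ) a (m + 1) / qPoch (Q : ℂ) (Q : ℂ) (m + 1)‖ * (‖w‖ ^ m * ‖w‖)
        ≤ Mq Q * (‖w‖ ^ m * ‖w‖) :=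
          mul_le_mul_of_nonneg_right (norm_coeff_le hQ0 hQ1 ha (m + 1)) (by positivity)
      _ = Mq Q * ‖w‖ * ‖w‖ ^ m := by ring
  have h1 : ‖(1 : ℂ) + ∑' m : ℕ,
      qPoch (Q : ℂ) a (m + 1) / qPoch (Q : ℂ) (Q : ℂ) (m + 1) * w ^ (m + 1) - 1‖
      = ‖∑' m : ℕ,
      qPoch (Q : ℂ) a (m + 1) / qPoch (Q : ℂ) (Q : ℂ) (m + 1) * w ^ (m + 1)‖ := by
    congr 1
    ring
  rw [h1]
  refine hb.trans ?_
  have h2 : (1 - ‖w‖)⁻¹ ≤ (1 - r)⁻¹ := by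
    refine inv_anti₀ (by linarith) (by linarith)
  calc Mq Q * ‖w‖ * (1 - ‖w‖)⁻¹ ≤ Mq Q * ‖w‖ * (1 - r)⁻¹ :=
        mul_le_mul_of_nonneg_left h2 (mul_nonneg (Mq_pos Q).le (norm_nonneg w))
    _ = Mq Q * (1 - r)⁻¹ * ‖w‖ := by ring

lemma iterEq {Q : ℝ} (hQ0 : 0 < Q) (hQ1 : Q < 1) {a x : ℂ} (ha : ‖a‖ ≤ 1) (hx : ‖x‖ < 1)
    (n : ℕ) :
    Fq (Q : ℂ) a x * ∏ j ∈ Finset.range n, (1 - x * (Q : ℂ) ^ j)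
      = (∏ j ∈ Finset.range n, (1 - a * x * (Q : ℂ) ^ j)) * Fq (Q : ℂ) a ((Q : ℂ) ^ n * x) := by
  induction n with
  | zero => simp
  | succ n ih =>
    have hQnx : ‖(Q : ℂ) ^ n * x‖ < 1 := by
      rw [norm_mul, norm_pow, Complex.norm_real, Real.norm_of_nonneg hQ0.le]
      have h2 : Q ^ n ≤ 1 := pow_le_one₀ hQ0.le hQ1.le
      nlinarith [norm_nonneg x, pow_pos hQ0 n]
    have hfe := funcEq hQ0 hQ1 ha hQnx
    rw [Finset.prod_range_succ, Finset.prod_range_succ, ← mul_assoc, ih]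
    have harg : (Q : ℂ) * ((Q : ℂ) ^ n * x) = (Q : ℂ) ^ (n + 1) * x := by ring
    rw [harg] at hfe
    have h1 : (1 - x * (Q : ℂ) ^ n) = (1 - (Q : ℂ) ^ n * x) := by ring
    have h2 : (1 - a * x * (Q : ℂ) ^ n) = (1 - a * ((Q : ℂ) ^ n * x)) := by ring
    calc (∏ j ∈ Finset.range n, (1 - a * x * (Q : ℂ) ^ j)) * Fq (Q : ℂ) a ((Q : ℂ) ^ n * x)
          * (1 - x * (Q : ℂ) ^ n)
        = (∏ j ∈ Finset.range n, (1 - a * x * (Q : ℂ) ^ j))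
          * ((1 - (Q : ℂ) ^ n * x) * Fq (Q : ℂ) a ((Q : ℂ) ^ n * x)) := by ring
      _ = (∏ j ∈ Finset.range n, (1 - a * x * (Q : ℂ) ^ j))
          * ((1 - a * ((Q : ℂ) ^ n * x)) * Fq (Q : ℂ) a ((Q : ℂ) ^ (n + 1) * x)) := by
            rw [hfe]
      _ = (∏ j ∈ Finset.range n, (1 - a * x * (Q : ℂ) ^ j)) * (1 - a * x * (Q : ℂ) ^ n)
          * Fq (Q : ℂ) a ((Q : ℂ) ^ (n + 1) * x) := by ring

lemma qbinom {Q : ℝ} (hQ0 : 0 < Q) (hQ1 : Q < 1) {a x : ℂ} (ha : ‖a‖ ≤ 1) (hx : ‖x‖ < 1) :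
    Fq (Q : ℂ) a x = qPochInf (Q : ℂ) (a * x) / qPochInf (Q : ℂ) x := by
  have hax : ‖a * x‖ < 1 := by
    rw [norm_mul]
    calc ‖a‖ * ‖x‖ ≤ 1 * ‖x‖ := mul_le_mul_of_nonneg_right ha (norm_nonneg x)
      _ = ‖x‖ := one_mul _
      _ < 1 := hx
  -- limit of LHS
  have T1 : Filter.Tendsto (fun n => Fq (Q : ℂ) a x * ∏ j ∈ Finset.range n, (1 - x * (Q : ℂ) ^ j))
      Filter.atTop (nhds (Fq (Q : ℂ) a x * qPochInf (Q : ℂ) x)) :=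
    (pochInf_hasProd hQ0 hQ1 hx).tendsto_prod_nat.const_mul _
  -- limit of RHS
  have T2b : Filter.Tendsto (fun n => Fq (Q : ℂ) a ((Q : ℂ) ^ n * x)) Filter.atTop (nhds 1) := by
    have hK : ∀ n : ℕ, ‖Fq (Q : ℂ) a ((Q : ℂ) ^ n * x) - 1‖
        ≤ (Mq Q * (1 - ‖x‖)⁻¹ * ‖x‖) * Q ^ n := by
      intro n
      have hw : ‖(Q : ℂ) ^ n * x‖ ≤ ‖x‖ := by
        rw [norm_mul, norm_pow, Complex.norm_real, Real.norm_of_nonneg hQ0.le]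
        have h2 : Q ^ n ≤ 1 := pow_le_one₀ hQ0.le hQ1.le
        nlinarith [norm_nonneg x, pow_pos hQ0 n]
      have := Fq_sub_one_bound hQ0 hQ1 ha hx hw
      calc ‖Fq (Q : ℂ) a ((Q : ℂ) ^ n * x) - 1‖
          ≤ Mq Q * (1 - ‖x‖)⁻¹ * ‖(Q : ℂ) ^ n * x‖ := this
        _ = (Mq Q * (1 - ‖x‖)⁻¹ * ‖x‖) * Q ^ n := by
            rw [norm_mul, norm_pow, Complex.norm_real, Real.norm_of_nonneg hQ0.le]
            ring
    have hT : Filter.Tendsto (fun n : ℕ => (Mq Q * (1 - ‖x‖)⁻¹ * ‖x‖) * Q ^ n)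
        Filter.atTop (nhds 0) := by
      have := (tendsto_pow_atTop_nhds_zero_of_lt_one hQ0.le hQ1).const_mul
        (Mq Q * (1 - ‖x‖)⁻¹ * ‖x‖)
      simpa using this
    have h0 : Filter.Tendsto (fun n => Fq (Q : ℂ) a ((Q : ℂ) ^ n * x) - 1)
        Filter.atTop (nhds 0) := squeeze_zero_norm hK hT
    have := h0.add_const 1
    simpa using this
  have T2 : Filter.Tendsto
      (fun n => (∏ j ∈ Finset.range n, (1 - a * x * (Q : ℂ) ^ j)) * Fq (Q : ℂ) a ((Q : ℂ) ^ n * x))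
      Filter.atTop (nhds (qPochInf (Q : ℂ) (a * x) * 1)) :=
    (pochInf_hasProd hQ0 hQ1 hax).tendsto_prod_nat.mul T2b
  have hEq : (fun n => Fq (Q : ℂ) a x * ∏ j ∈ Finset.range n, (1 - x * (Q : ℂ) ^ j))
      = (fun n => (∏ j ∈ Finset.range n, (1 - a * x * (Q : ℂ) ^ j))
          * Fq (Q : ℂ) a ((Q : ℂ) ^ n * x)) :=
    funext (fun n => iterEq hQ0 hQ1 ha hx n)
  rw [hEq] at T1
  have hfinal : Fq (Q : ℂ) a x * qPochInf (Q : ℂ) x = qPochInf (Q : ℂ) (a * x) * 1 :=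
    tendsto_nhds_unique T1 T2
  rw [mul_one] at hfinal
  rw [eq_div_iff (pochInf_ne_zero hQ0 hQ1 hx)]
  exact hfinal


lemma qpow_add (q : ℝ) (u v : ℂ) : qpow q (u + v) = qpow q u * qpow q v := by
  rw [qpow, qpow, qpow, add_mul, Complex.exp_add]

lemma qpow_one {q : ℝ} (hq0 : 0 < q) : qpow q 1 = (q : ℂ) := by
  rw [qpow, one_mul, ← Complex.ofReal_exp, Real.exp_log hq0]

lemma qpow_two {q : ℝ} (hq0 : 0 < q) : qpow q 2 = (q : ℂ) ^ 2 := by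
  rw [show (2 : ℂ) = 1 + 1 by norm_num, qpow_add, qpow_one hq0]
  ring

lemma norm_qpow (q : ℝ) (w : ℂ) : ‖qpow q w‖ = Real.exp (w.re * Real.log q) := by
  rw [qpow, Complex.norm_exp]
  congr 1
  simp [Complex.mul_re]

lemma norm_a_le {q : ℝ} (hq0 : 0 < q) (hq1 : q < 1) (ν : ℝ) :
    ‖qpow q (-(2 * Complex.I * ν) + 2)‖ ≤ 1 := by
  rw [norm_qpow]
  have hre : (-(2 * Complex.I * (ν : ℂ)) + 2).re = 2 := by simp
  rw [hre]
  have h1 : (2 : ℝ) * Real.log q = Real.log (q ^ 2) := by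
    rw [Real.log_pow]
    push_cast
    ring
  rw [h1, Real.exp_log (by positivity)]
  nlinarith

lemma psiL_eq (q ν : ℝ) (zb z : ℂ) :
    psiL q ν zb z = Fq ((q : ℂ) ^ 2) (qpow q (-(2 * Complex.I * ν) + 2))
      (-((q : ℂ) ^ 2) * (zb * z)) := by
  rw [psiL, Fq]
  refine tsum_congr (fun m => ?_)
  rw [pow_mul]
  ring

/-- `ψ_L` is the `U_q(SU(2))`-invariant vector of the class-one principal
series: it satisfies `π(C*).ψ_L = ψ_L.π(B)` and
`π(A*).ψ_L.π(A⁻¹) = ψ_L`, and it has the closed form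
`ψ_L(z̄,z) = (−q^{−2iν+4}z̄z;q²)_∞/(−q²z̄z;q²)_∞` for `|z̄z| < q⁻²`. -/
theorem psiL_invariant_vector (q ν : ℝ) (hq0 : 0 < q) (hq1 : q < 1)
    (zb z : ℂ) (hzb : zb ≠ 0) (hz : z ≠ 0)
    (hconv : ‖zb * z‖ < q⁻¹) :
    (zb / (1 - (q : ℂ) ^ 2) *
        (-(qpow q ((Complex.I * ν + 2) / 2)) * psiL q ν ((q : ℂ)⁻¹ * zb) z
          + qpow q (-(3 * Complex.I * ν / 2) + 3) * psiL q ν ((q : ℂ) * zb) z)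
      = qpow q (Complex.I * ν / 2)
          * (psiL q ν zb ((q : ℂ)⁻¹ * z) - psiL q ν zb ((q : ℂ) * z))
          / ((1 - (q : ℂ) ^ 2) * z)) ∧
    psiL q ν ((q : ℂ)⁻¹ * zb) ((q : ℂ) * z) = psiL q ν zb z ∧
    (∀ w1 w2 : ℂ, ‖w1 * w2‖ < (q⁻¹) ^ 2 →
      psiL q ν w1 w2
        = qPochInf ((q : ℂ) ^ 2) (-(qpow q (-(2 * Complex.I * ν) + 4)) * (w1 * w2))
            / qPochInf ((q : ℂ) ^ 2) (-((q : ℂ) ^ 2) * (w1 * w2))) := by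
  have hqc : (q : ℂ) ≠ 0 := by exact_mod_cast hq0.ne'
  have hQ0 : 0 < q ^ 2 := by positivity
  have hQ1 : q ^ 2 < 1 := by nlinarith
  have hcast : ((q ^ 2 : ℝ) : ℂ) = (q : ℂ) ^ 2 := by push_cast; ring
  set a := qpow q (-(2 * Complex.I * ν) + 2) with haa
  have ha : ‖a‖ ≤ 1 := norm_a_le hq0 hq1 ν
  set C := qpow q (Complex.I * ν / 2) with hCC
  have hA : qpow q ((Complex.I * ν + 2) / 2) = C * q := by
    rw [show (Complex.I * (ν : ℂ) + 2) / 2 = Complex.I * ν / 2 + 1 by ring, qpow_add,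
      qpow_one hq0, hCC]
  have hB : qpow q (-(3 * Complex.I * ν / 2) + 3) = C * a * q := by
    rw [show -(3 * Complex.I * (ν : ℂ) / 2) + 3
        = Complex.I * ν / 2 + ((-(2 * Complex.I * ν) + 2) + 1) by ring, qpow_add, qpow_add,
      qpow_one hq0, hCC, haa]
    ring
  refine ⟨?_, ?_, ?_⟩
  · -- part 1
    have hy : ‖-(q : ℂ) * (zb * z)‖ < 1 := by
      rw [norm_mul, norm_neg, Complex.norm_real, Real.norm_of_nonneg hq0.le]
      have h2 := mul_lt_mul_of_pos_left hconv hq0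
      have h3 : q * q⁻¹ = 1 := by field_simp
      linarith [h2, h3.le]
    have hfe := funcEq (Q := q ^ 2) hQ0 hQ1 ha hy
    rw [hcast] at hfe
    rw [psiL_eq, psiL_eq, psiL_eq, psiL_eq]
    rw [show -((q : ℂ) ^ 2) * ((q : ℂ)⁻¹ * zb * z) = -(q : ℂ) * (zb * z) from by
      field_simp]
    rw [show -((q : ℂ) ^ 2) * ((q : ℂ) * zb * z) = (q : ℂ) ^ 2 * (-(q : ℂ) * (zb * z)) from by
      ring]
    rw [show -((q : ℂ) ^ 2) * (zb * ((q : ℂ)⁻¹ * z)) = -(q : ℂ) * (zb * z) from by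
      field_simp]
    rw [show -((q : ℂ) ^ 2) * (zb * ((q : ℂ) * z)) = (q : ℂ) ^ 2 * (-(q : ℂ) * (zb * z)) from by
      ring]
    rw [hA, hB]
    set F1 := Fq ((q : ℂ) ^ 2) a (-(q : ℂ) * (zb * z)) with hF1
    set F2 := Fq ((q : ℂ) ^ 2) a ((q : ℂ) ^ 2 * (-(q : ℂ) * (zb * z))) with hF2
    have h1q : (1 : ℂ) - (q : ℂ) ^ 2 ≠ 0 := by
      intro h
      have : ((1 - q ^ 2 : ℝ) : ℂ) = 0 := by push_cast; linear_combination h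
      simp only [Complex.ofReal_eq_zero] at this
      nlinarith
    have key : zb * z * (-(C * q) * F1 + C * a * q * F2) = C * (F1 - F2) := by
      linear_combination (-C) * hfe
    field_simp
    linear_combination key
  · -- part 2
    rw [psiL_eq, psiL_eq]
    rw [show -((q : ℂ) ^ 2) * ((q : ℂ)⁻¹ * zb * ((q : ℂ) * z)) = -((q : ℂ) ^ 2) * (zb * z) from by
      field_simp]
  · -- part 3
    intro w1 w2 hw
    have hx : ‖-((q : ℂ) ^ 2) * (w1 * w2)‖ < 1 := by
      rw [norm_mul, norm_neg, norm_pow, Complex.norm_real, Real.norm_of_nonneg hq0.le]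
      have h2 := mul_lt_mul_of_pos_left hw (show (0:ℝ) < q ^ 2 by positivity)
      have h3 : q ^ 2 * (q⁻¹) ^ 2 = 1 := by field_simp
      linarith [h2, h3.le]
    rw [psiL_eq]
    have hqb := qbinom (Q := q ^ 2) hQ0 hQ1 ha hx
    rw [hcast] at hqb
    rw [hqb]
    congr 2
    rw [show -(2 * Complex.I * (ν : ℂ)) + 4 = (-(2 * Complex.I * ν) + 2) + 2 by ring,
      qpow_add, qpow_two hq0, ← haa]
    ring
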